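/- arXiv:1302.4141 — 4 statements merged into one kernel-verified Lean document; each statement's English description precedes it below -/
import Mathlib

section
/- Complementary-dual principle (Gaussian case): suppose σ̄ ∈ (-y, w - y) satisfies both (x - F(σ̄)/G(σ̄))² = -2α²·ln((σ̄+y)/w) and G(σ̄) ≠ 0, where G(σ) = β - (σ²+yσ)/α² and F(σ) = -x(σ²+yσ)/α². Then c̄ = F(σ̄)/G(σ̄) is a critical point of P(c) = (1/2)(w·exp(-(x-c)²/(2α²)) - y)² + (1/2)βc², and P(c̄) = P^d(σ̄), where P^d(σ) = -(1/2)F(σ)²/G(σ) - ln((σ+y)/w)·(σ² + yσ) + (1/2)σ² - x²(σ² + yσ)/(2α²). -/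
noncomputable def primalP (w x y α β c : ℝ) : ℝ :=
  (1/2) * (w * Real.exp (-(x - c)^2 / (2 * α^2)) - y)^2 + (1/2) * β * c^2

noncomputable def dualG (y α β σ : ℝ) : ℝ := β - (σ^2 + y * σ) / α^2

noncomputable def dualF (x y α σ : ℝ) : ℝ := -x * (σ^2 + y * σ) / α^2

noncomputable def dualPd (w x y α β σ : ℝ) : ℝ :=
  -(1/2) * (dualF x y α σ)^2 / (dualG y α β σ)
    - Real.log ((σ + y) / w) * (σ^2 + y * σ)
    + (1/2) * σ^2 - x^2 * (σ^2 + y * σ) / (2 * α^2)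

/-- Complementary-dual principle, Gaussian case: if σ̄ ∈ (-y, w-y) satisfies the
dual critical condition (x - F(σ̄)/G(σ̄))² = -2α²·ln((σ̄+y)/w) and G(σ̄) ≠ 0, then
c̄ = F(σ̄)/G(σ̄) is a critical point of the primal and P(c̄) = P^d(σ̄). -/
theorem complementary_dual_principle_gaussian
    (w x y α β sb : ℝ) (hw : 0 < w) (hy : 0 < y) (hyw : y < w)
    (hα : α ≠ 0) (hβ : 0 < β)
    (hmem : sb ∈ Set.Ioo (-y) (w - y))
    (hG : dualG y α β sb ≠ 0)
    (hcond : (x - dualF x y α sb / dualG y α β sb)^2 =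
      -2 * α^2 * Real.log ((sb + y) / w)) :
    deriv (fun c => primalP w x y α β c) (dualF x y α sb / dualG y α β sb) = 0 ∧
    primalP w x y α β (dualF x y α sb / dualG y α β sb) = dualPd w x y α β sb := by
  obtain ⟨h1, h2⟩ := hmem
  have hα2 : α^2 ≠ 0 := pow_ne_zero 2 hα
  have hα2' : (0:ℝ) < α^2 := lt_of_le_of_ne (sq_nonneg α) (Ne.symm hα2)
  set cb := dualF x y α sb / dualG y α β sb with hcb
  have hsy : 0 < sb + y := by linarith
  have ht : 0 < (sb + y) / w := div_pos hsy hw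
  have hlog : Real.log ((sb + y) / w) = -(x - cb)^2 / (2 * α^2) := by
    rw [hcond]
    field_simp
  have hE : Real.exp (-(x - cb)^2 / (2 * α^2)) = (sb + y) / w := by
    rw [← hlog, Real.exp_log ht]
  have hwE : w * Real.exp (-(x - cb)^2 / (2 * α^2)) = sb + y := by
    rw [hE]; field_simp
  -- derivative structure
  have hx1 : HasDerivAt (fun c : ℝ => x - c) (-1) cb := by
    simpa using (hasDerivAt_id cb).const_sub x
  have hsq := hx1.pow 2
  have hdiv := hsq.neg.div_const (2 * α^2)
  have hexp := hdiv.exp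
  have hmul := hexp.const_mul w
  have hsub := hmul.sub_const y
  have hsq2 := hsub.pow 2
  have hhalf := hsq2.const_mul ((1:ℝ)/2)
  have hc2 := ((hasDerivAt_pow 2 cb)).const_mul ((1:ℝ)/2 * β)
  have hf := hhalf.add hc2
  have hG' : β - (sb^2 + y * sb) / α^2 ≠ 0 := by
    simpa [dualG] using hG
  have hden : α^2 * β - (sb^2 + y * sb) ≠ 0 := by
    intro h
    apply hG'
    field_simp
    linarith [h]
  have hden2 : -(sb * y * α ^ 2) - sb ^ 2 * α ^ 2 + α ^ 4 * β ≠ 0 := by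
    have : -(sb * y * α ^ 2) - sb ^ 2 * α ^ 2 + α ^ 4 * β = α ^ 2 * (α ^ 2 * β - (sb ^ 2 + y * sb)) := by ring
    rw [this]
    exact mul_ne_zero hα2 hden
  have hden3 : -(sb * α ^ 4 * y * 2) - sb ^ 2 * α ^ 4 * 2 + α ^ 6 * β * 2 ≠ 0 := by
    have : -(sb * α ^ 4 * y * 2) - sb ^ 2 * α ^ 4 * 2 + α ^ 6 * β * 2 =
        (2 * α ^ 2 * α ^ 2) * (α ^ 2 * β - (sb ^ 2 + y * sb)) := by ring
    rw [this]
    exact mul_ne_zero (by positivity) hden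
  have hcbv : cb = (-x * (sb^2 + y * sb)) / (α^2 * β - (sb^2 + y * sb)) := by
    rw [hcb]; simp only [dualF, dualG]
    rw [div_div]
    congr 1
    field_simp
  constructor
  · have hd : deriv (fun c => primalP w x y α β c) cb =
      1/2 * (↑2 * (w * Real.exp (-(x - cb) ^ 2 / (2 * α ^ 2)) - y) ^ (2 - 1) *
        (w * (Real.exp (-(x - cb) ^ 2 / (2 * α ^ 2)) * (-(↑2 * (x - cb) ^ (2 - 1) * -1) / (2 * α ^ 2))))) +
      1/2 * β * (↑2 * cb ^ (2 - 1)) := by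
      unfold primalP
      exact hf.deriv
    rw [hd, hwE, hE]
    rw [hcbv]
    field_simp [hden2, show α ^ 2 * β - sb * (sb + y) ≠ 0 from fun h => hden (by linarith)]
    ring
  · unfold primalP dualPd
    rw [hwE, hlog]
    have hxc : x - cb = x * α ^ 2 * β / (α ^ 2 * β - (sb ^ 2 + y * sb)) := by
      rw [hcbv, eq_div_iff hden, sub_mul, div_mul_cancel₀ _ hden]
      ring
    have hFG : -(1/2) * (dualF x y α sb) ^ 2 / (dualG y α β sb)
        = -(x ^ 2 * (sb ^ 2 + y * sb) ^ 2) / (2 * (α ^ 2 * β - (sb ^ 2 + y * sb)) * α ^ 2) := by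
      simp only [dualF, dualG]
      rw [div_eq_div_iff hG' (by exact mul_ne_zero (mul_ne_zero two_ne_zero hden) hα2)]
      field_simp
    have h0 : sb + y - y = sb := by ring
    rw [hxc, hFG, hcbv, h0]
    field_simp [hden, show β * α ^ 2 - sb * (sb + y) ≠ 0 from fun h => hden (by linarith)]
    ring
end

section
/- Sign relation between second derivatives: at a critical point σ̄ of the dual with σ̄ ≠ -y/2, G(σ̄) ≠ 0 and σ̄ + y > 0, one has (P^d)''(σ̄) = -((2σ̄+y)/(G(σ̄)(σ̄+y)))·P''(c(σ̄)). In particular, if (2σ̄+y) > 0 and G(σ̄) > 0 then (P^d)''(σ̄) and P''(c(σ̄)) have opposite signs, while if (2σ̄+y) > 0 and G(σ̄) < 0 they have the same sign. -/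
lemma hq_aux (y σ : ℝ) : HasDerivAt (fun σ : ℝ => σ^2 + y*σ) (2*σ + y) σ := by
  have h := (hasDerivAt_pow 2 σ).add ((hasDerivAt_id σ).const_mul y)
  refine h.congr_deriv ?_
  norm_num

lemma hqp_aux (y σ : ℝ) : HasDerivAt (fun σ : ℝ => 2*σ + y) 2 σ := by
  have h := ((hasDerivAt_id σ).const_mul 2).add_const y
  refine h.congr_deriv ?_
  norm_num

lemma hGb_aux (y α β σ : ℝ) :
    HasDerivAt (fun σ : ℝ => β - (σ^2+y*σ)/α^2) (-((2*σ+y)/α^2)) σ :=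
  ((hq_aux y σ).div_const (α^2)).const_sub β

lemma hL_aux (w y σ : ℝ) (hw : 0 < w) (hσ : 0 < σ + y) :
    HasDerivAt (fun σ : ℝ => Real.log ((σ+y)/w)) (1/(σ+y)) σ := by
  have hw' : w ≠ 0 := ne_of_gt hw
  have hσ' : σ + y ≠ 0 := ne_of_gt hσ
  have h := (((hasDerivAt_id σ).add_const y).div_const w).log (ne_of_gt (div_pos hσ hw))
  refine h.congr_deriv ?_
  simp only [id]
  field_simp

noncomputable def D1aux (w x y α β σ : ℝ) : ℝ :=
  -(x^2/(2*α^4)) * (2*(σ^2+y*σ)*(2*σ+y)*(β - (σ^2+y*σ)/α^2) + (σ^2+y*σ)^2*(2*σ+y)/α^2)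
      / (β - (σ^2+y*σ)/α^2)^2
    - Real.log ((σ+y)/w) * (2*σ+y) - x^2*(2*σ+y)/(2*α^2)

lemma dualPd_deriv (w x y α β σ : ℝ) (hw : 0 < w) (hα : α ≠ 0) (hσ : 0 < σ + y)
    (hGne : β - (σ^2+y*σ)/α^2 ≠ 0) :
    HasDerivAt (fun σ => dualPd w x y α β σ) (D1aux w x y α β σ) σ := by
  have hα2 : (α:ℝ)^2 ≠ 0 := pow_ne_zero 2 hα
  have hσ' : σ + y ≠ 0 := ne_of_gt hσ
  have hw' : w ≠ 0 := ne_of_gt hw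
  have hF : HasDerivAt (fun σ : ℝ => -x * (σ^2+y*σ)/α^2) (-x*(2*σ+y)/α^2) σ :=
    ((hq_aux y σ).const_mul (-x)).div_const (α^2)
  have hG := hGb_aux y α β σ
  have hl := hL_aux w y σ hw hσ
  have hTA := ((hF.pow 2).const_mul (-(1/2))).div hG hGne
  have hTB := hl.mul (hq_aux y σ)
  have hTC := (hasDerivAt_pow 2 σ).const_mul ((1:ℝ)/2)
  have hTD := ((hq_aux y σ).const_mul (x^2)).div_const (2*α^2)
  have h := ((hTA.sub hTB).add hTC).sub hTD
  have heq : (fun σ => dualPd w x y α β σ) =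
      (fun σ => -(1/2) * (-x * (σ^2 + y*σ)/α^2)^2 / (β - (σ^2+y*σ)/α^2)
        - Real.log ((σ+y)/w) * (σ^2+y*σ) + (1/2)*σ^2 - x^2*(σ^2+y*σ)/(2*α^2)) := by
    funext t; simp only [dualPd, dualF, dualG]
  rw [heq]
  refine h.congr_deriv ?_
  simp only [D1aux, Pi.pow_apply]
  set Gv := β - (σ^2+y*σ)/α^2 with hGv
  field_simp
  ring_nf
  field_simp

lemma D1aux_deriv (w x y α β sb : ℝ) (hw : 0 < w) (hα : α ≠ 0) (hσ : 0 < sb + y)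
    (hGne : β - (sb^2+y*sb)/α^2 ≠ 0) :
    deriv (fun σ => D1aux w x y α β σ) sb =
      -(x^2/α^4)*((2*sb+y)^2+2*(sb^2+y*sb))/(β - (sb^2+y*sb)/α^2)
      - x^2*(sb^2+y*sb)^2/(α^6*(β - (sb^2+y*sb)/α^2)^2)
      - 2*x^2*(sb^2+y*sb)*(2*sb+y)^2/(α^6*(β - (sb^2+y*sb)/α^2)^2)
      - x^2*(sb^2+y*sb)^2*(2*sb+y)^2/(α^8*(β - (sb^2+y*sb)/α^2)^3)
      - (2*sb+y)/(sb+y) - 2*Real.log ((sb+y)/w) - x^2/α^2 := by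
  have hα2 : (α:ℝ)^2 ≠ 0 := pow_ne_zero 2 hα
  have hσ' : sb + y ≠ 0 := ne_of_gt hσ
  have hw' : w ≠ 0 := ne_of_gt hw
  have hqs := hq_aux y sb
  have hqps := hqp_aux y sb
  have hGs := hGb_aux y α β sb
  have hls := hL_aux w y sb hw hσ
  have hN := (((hqs.const_mul 2).mul hqps).mul hGs).add
    (((hqs.pow 2).mul hqps).div_const (α^2))
  have hA := (hN.const_mul (-(x^2/(2*α^4)))).div (hGs.pow 2) (pow_ne_zero 2 hGne)
  have hB := hls.mul hqps
  have hC := (hqps.const_mul (x^2)).div_const (2*α^2)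
  have h := (hA.sub hB).sub hC
  have heq : (fun σ => D1aux w x y α β σ) =
      (fun σ => -(x^2/(2*α^4)) * (2*(σ^2+y*σ)*(2*σ+y)*(β - (σ^2+y*σ)/α^2)
          + (σ^2+y*σ)^2*(2*σ+y)/α^2) / (β - (σ^2+y*σ)/α^2)^2
        - Real.log ((σ+y)/w) * (2*σ+y) - x^2*(2*σ+y)/(2*α^2)) := by
    funext t; simp only [D1aux]
  rw [heq]; refine h.deriv.trans ?_
  simp only [Pi.pow_apply, Pi.mul_apply, Pi.add_apply]
  set Gv := β - (sb^2+y*sb)/α^2 with hGv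
  field_simp
  field_simp
  ring


lemma inner_hasDeriv (x α : ℝ) (hα : α ≠ 0) (c : ℝ) :
    HasDerivAt (fun c : ℝ => -(x - c)^2 / (2*α^2)) ((x - c)/α^2) c := by
  have h : HasDerivAt (fun c : ℝ => x - c) (-1) c := (hasDerivAt_id c).const_sub x
  have h2 := ((h.pow 2).neg).div_const (2*α^2)
  refine h2.congr_deriv ?_
  have hα2 : (α:ℝ)^2 ≠ 0 := pow_ne_zero 2 hα
  field_simp
  ring

lemma primal_deriv_eq (w x y α β : ℝ) (hα : α ≠ 0) :
    deriv (fun c => primalP w x y α β c) = fun c =>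
      (w * Real.exp (-(x - c)^2 / (2*α^2)) - y) *
        (w * Real.exp (-(x - c)^2 / (2*α^2)) * ((x - c)/α^2)) + β * c := by
  funext c
  have hg : HasDerivAt (fun c : ℝ => w * Real.exp (-(x - c)^2 / (2*α^2)) - y)
      (w * (Real.exp (-(x - c)^2 / (2*α^2)) * ((x - c)/α^2))) c :=
    (((inner_hasDeriv x α hα c).exp).const_mul w).sub_const y
  have h := ((hg.pow 2).const_mul ((1:ℝ)/2)).add ((hasDerivAt_pow 2 c).const_mul ((1/2)*β))
  have heq : (fun c => primalP w x y α β c) =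
      (fun c : ℝ => (1/2) * (w * Real.exp (-(x - c)^2 / (2*α^2)) - y)^2 + (1/2)*β*c^2) := by
    funext t; simp only [primalP]
  rw [heq]; refine h.deriv.trans ?_
  push_cast
  ring

lemma primal_second (w x y α β cb : ℝ) (hα : α ≠ 0) :
    deriv (deriv (fun c => primalP w x y α β c)) cb =
      (w * Real.exp (-(x - cb)^2 / (2*α^2)))^2 * ((x-cb)^2/α^4)
      + (w * Real.exp (-(x - cb)^2 / (2*α^2)) - y) *
          (w * Real.exp (-(x - cb)^2 / (2*α^2))) * ((x-cb)^2/α^4 - 1/α^2)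
      + β := by
  rw [primal_deriv_eq w x y α β hα]
  have hE := (inner_hasDeriv x α hα cb).exp
  have hu := hE.const_mul w
  have hg := hu.sub_const y
  have hlin : HasDerivAt (fun c : ℝ => (x - c)/α^2) ((-1)/α^2) cb :=
    ((hasDerivAt_id cb).const_sub x).div_const (α^2)
  have h := (hg.mul (hu.mul hlin)).add ((hasDerivAt_id' cb).const_mul β)
  refine h.deriv.trans ?_
  simp only [Pi.mul_apply]
  have hα2 : (α:ℝ)^2 ≠ 0 := pow_ne_zero 2 hα
  field_simp
  ring

lemma signh_pos {a p : ℝ} (ha : 0 < a) : 0 < -a * p ↔ p < 0 := by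
  constructor
  · intro h; nlinarith
  · intro h; nlinarith

lemma signh_neg {a p : ℝ} (ha : a < 0) : 0 < -a * p ↔ 0 < p := by
  constructor
  · intro h; nlinarith
  · intro h; nlinarith


/-- Sign relation between second derivatives at a dual critical point σ̄ ≠ -y/2:
(P^d)''(σ̄) = -((2σ̄+y)/(G(σ̄)(σ̄+y)))·P''(c(σ̄)); consequently, if 2σ̄+y > 0 and
G(σ̄) > 0 they have opposite signs, while if 2σ̄+y > 0 and G(σ̄) < 0 they have
the same sign. -/
theorem second_derivative_sign_relation
    (w x y α β sb : ℝ) (hw : 0 < w) (hy : 0 < y) (hyw : y < w)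
    (hα : α ≠ 0) (hβ : 0 < β)
    (hmem : sb ∈ Set.Ioo (-y) (w - y))
    (hne : sb ≠ -y / 2) (hG : dualG y α β sb ≠ 0) (hsy : 0 < sb + y)
    (hcrit : (x - dualF x y α sb / dualG y α β sb)^2 =
      -2 * α^2 * Real.log ((sb + y) / w)) :
    deriv (deriv (fun σ => dualPd w x y α β σ)) sb =
        -((2 * sb + y) / (dualG y α β sb * (sb + y))) *
          deriv (deriv (fun c => primalP w x y α β c))
            (dualF x y α sb / dualG y α β sb) ∧
    ((0 < 2 * sb + y ∧ 0 < dualG y α β sb →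
      (0 < deriv (deriv (fun σ => dualPd w x y α β σ)) sb ↔
        deriv (deriv (fun c => primalP w x y α β c))
          (dualF x y α sb / dualG y α β sb) < 0)) ∧
     (0 < 2 * sb + y ∧ dualG y α β sb < 0 →
      (0 < deriv (deriv (fun σ => dualPd w x y α β σ)) sb ↔
        0 < deriv (deriv (fun c => primalP w x y α β c))
          (dualF x y α sb / dualG y α β sb)))) := by
  have hα2 : (α:ℝ)^2 ≠ 0 := pow_ne_zero 2 hα
  have hw' : w ≠ 0 := ne_of_gt hw
  have hσ' : sb + y ≠ 0 := ne_of_gt hsy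
  have hGu : β - (sb^2+y*sb)/α^2 ≠ 0 := hG
  have hL2 : Real.log ((sb + y) / w) =
      -(x - dualF x y α sb / dualG y α β sb)^2 / (2*α^2) := by
    rw [hcrit]; field_simp
  have hexp : Real.exp (-(x - dualF x y α sb / dualG y α β sb)^2 / (2*α^2)) = (sb+y)/w := by
    rw [← hL2]; exact Real.exp_log (div_pos hsy hw)
  have hev : (deriv (fun σ => dualPd w x y α β σ)) =ᶠ[nhds sb]
      (fun σ => D1aux w x y α β σ) := by
    have h1 : IsOpen {σ : ℝ | -y < σ} := isOpen_lt continuous_const continuous_id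
    have h2 : IsOpen {σ : ℝ | β - (σ^2+y*σ)/α^2 ≠ 0} := by
      have hc : Continuous (fun σ : ℝ => β - (σ^2+y*σ)/α^2) :=
        continuous_const.sub
          (((continuous_pow 2).add (continuous_const.mul continuous_id)).div_const (α^2))
      exact IsOpen.preimage hc isOpen_compl_singleton
    filter_upwards [(h1.inter h2).mem_nhds ⟨hmem.1, hGu⟩] with σ hσ
    have hσy : 0 < σ + y := by have := hσ.1; simp only [Set.mem_setOf_eq] at this; linarith
    exact (dualPd_deriv w x y α β σ hw hα hσy hσ.2).deriv
  have hd2 : deriv (deriv (fun σ => dualPd w x y α β σ)) sb =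
      deriv (fun σ => D1aux w x y α β σ) sb := hev.deriv_eq
  have hmain : deriv (deriv (fun σ => dualPd w x y α β σ)) sb =
      -((2 * sb + y) / (dualG y α β sb * (sb + y))) *
        deriv (deriv (fun c => primalP w x y α β c))
          (dualF x y α sb / dualG y α β sb) := by
    rw [hd2, D1aux_deriv w x y α β sb hw hα hsy hGu,
      primal_second w x y α β (dualF x y α sb / dualG y α β sb) hα, hexp, hL2]
    simp only [dualF, dualG]
    obtain ⟨G0, hG0⟩ : ∃ G0:ℝ, G0 = β - (sb^2+y*sb)/α^2 := ⟨_, rfl⟩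
    rw [← hG0]
    rw [show (β - (sb^2+y*sb)/α^2 ≠ 0) = (G0 ≠ 0) from by rw [hG0]] at hGu
    have hβ : β = G0 + (sb^2+y*sb)/α^2 := by rw [hG0]; ring
    rw [hβ]
    field_simp
    ring
  refine ⟨hmain, ?_, ?_⟩
  · rintro ⟨h1, h2⟩
    rw [hmain]
    exact signh_pos (div_pos h1 (mul_pos h2 hsy))
  · rintro ⟨h1, h2⟩
    rw [hmain]
    exact signh_neg (div_neg_of_pos_of_neg h1 (mul_neg_of_neg_of_pos h2 hsy))
end

section
/- Let x₀ = √(-2α²·ln(y/(2w))) (well-defined since 0 < y < 2w). The point c̄ = x ± x₀ with w·exp(-(x-c̄)²/(2α²)) = y/2 is a critical point of the primal P(c) = (1/2)(w·e^{-(x-c)²/(2α²)} - y)² + (1/2)βc² if and only if βx + (β + y²/(4α²))x₀ = 0 or βx - (β + y²/(4α²))x₀ = 0. -/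
lemma primalP_hasDerivAt (w x y α β c : ℝ) (hα : α ≠ 0) :
    HasDerivAt (fun c => primalP w x y α β c)
      ((w * Real.exp (-(x - c)^2 / (2 * α^2)) - y) *
        (w * Real.exp (-(x - c)^2 / (2 * α^2)) * ((x - c) / α^2)) + β * c) c := by
  have hα2 : (2 : ℝ) * α ^ 2 ≠ 0 := by positivity
  have hu : HasDerivAt (fun c => -(x - c)^2 / (2 * α^2)) ((x - c) / α^2) c := by
    have h1 : HasDerivAt (fun c : ℝ => x - c) (-1) c := by
      simpa using (hasDerivAt_id c).const_sub x
    have h2 : HasDerivAt (fun c : ℝ => -(x - c)^2) (2 * (x - c)) c := by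
      have := (h1.pow 2).neg
      refine this.congr_deriv ?_
      ring
    have := h2.div_const (2 * α^2)
    refine this.congr_deriv ?_
    field_simp
  have hexp : HasDerivAt (fun c => Real.exp (-(x - c)^2 / (2 * α^2)))
      (Real.exp (-(x - c)^2 / (2 * α^2)) * ((x - c) / α^2)) c := hu.exp
  have hg : HasDerivAt (fun c => w * Real.exp (-(x - c)^2 / (2 * α^2)) - y)
      (w * (Real.exp (-(x - c)^2 / (2 * α^2)) * ((x - c) / α^2))) c :=
    (hexp.const_mul w).sub_const y
  have hsq : HasDerivAt (fun c => (1/2) * (w * Real.exp (-(x - c)^2 / (2 * α^2)) - y)^2)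
      ((w * Real.exp (-(x - c)^2 / (2 * α^2)) - y) *
        (w * Real.exp (-(x - c)^2 / (2 * α^2)) * ((x - c) / α^2))) c := by
    have := (hg.pow 2).const_mul (1/2 : ℝ)
    refine this.congr_deriv ?_
    ring
  have hq : HasDerivAt (fun c : ℝ => (1/2) * β * c^2) (β * c) c := by
    have := (hasDerivAt_pow 2 c).const_mul ((1/2) * β)
    refine this.congr_deriv ?_
    ring
  exact hsq.add hq

/-- With x₀ = √(-2α²·ln(y/(2w))), the point c̄ = x ± x₀ (at which
w·e^{-(x-c̄)²/(2α²)} = y/2) is a critical point of the primal if and only if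
βx + (β + y²/(4α²))x₀ = 0, resp. βx - (β + y²/(4α²))x₀ = 0. -/
theorem pseudo_point_primal_criticality
    (w x y α β : ℝ) (hw : 0 < w) (hy : 0 < y) (hyw : y < 2 * w)
    (hα : α ≠ 0) (hβ : 0 < β) :
    (deriv (fun c => primalP w x y α β c)
        (x + Real.sqrt (-2 * α^2 * Real.log (y / (2 * w)))) = 0 ↔
      β * x + (β + y^2 / (4 * α^2)) *
        Real.sqrt (-2 * α^2 * Real.log (y / (2 * w))) = 0) ∧
    (deriv (fun c => primalP w x y α β c)
        (x - Real.sqrt (-2 * α^2 * Real.log (y / (2 * w)))) = 0 ↔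
      β * x - (β + y^2 / (4 * α^2)) *
        Real.sqrt (-2 * α^2 * Real.log (y / (2 * w))) = 0) := by
  set x₀ := Real.sqrt (-2 * α^2 * Real.log (y / (2 * w))) with hx₀
  have hα2 : (0 : ℝ) < α ^ 2 := by positivity
  have hratio : y / (2 * w) < 1 := by
    rw [div_lt_one (by linarith)]; linarith
  have hratio0 : 0 < y / (2 * w) := by positivity
  have hlog : Real.log (y / (2 * w)) < 0 := Real.log_neg hratio0 hratio
  have harg : 0 ≤ -2 * α^2 * Real.log (y / (2 * w)) := by nlinarith
  have hx₀sq : x₀ ^ 2 = -2 * α^2 * Real.log (y / (2 * w)) := Real.sq_sqrt harg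
  have hkey : Real.exp (-x₀^2 / (2 * α^2)) = y / (2 * w) := by
    rw [hx₀sq]
    rw [show -(-2 * α^2 * Real.log (y / (2 * w))) / (2 * α^2) = Real.log (y / (2 * w)) by
      field_simp]
    exact Real.exp_log hratio0
  have hval : w * Real.exp (-x₀^2 / (2 * α^2)) = y / 2 := by
    rw [hkey]; field_simp
  constructor
  · have hd := (primalP_hasDerivAt w x y α β (x + x₀) hα).deriv
    rw [hd]
    have h1 : -(x - (x + x₀))^2 = -x₀^2 := by ring
    rw [h1, hval]
    have heq : (y / 2 - y) * (y / 2 * ((x - (x + x₀)) / α ^ 2)) + β * (x + x₀) =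
        β * x + (β + y ^ 2 / (4 * α ^ 2)) * x₀ := by
      field_simp
      ring
    rw [heq]
  · have hd := (primalP_hasDerivAt w x y α β (x - x₀) hα).deriv
    rw [hd]
    have h1 : -(x - (x - x₀))^2 = -x₀^2 := by ring
    rw [h1, hval]
    have heq : (y / 2 - y) * (y / 2 * ((x - (x - x₀)) / α ^ 2)) + β * (x - x₀) =
        β * x - (β + y ^ 2 / (4 * α ^ 2)) * x₀ := by
      field_simp
      ring
    rw [heq]
end

section
/- At any point c̄ satisfying w·exp(-(x-c̄)²/(2α²)) = y/2 (i.e., corresponding to σ = -y/2), the second derivative of the primal satisfies P''(c̄) = β + y²/(4α²) > 0; hence any such critical point of P is a strict local minimum. -/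
/-- Second derivative of the Gaussian primal, as in the paper. -/
noncomputable def primalPsec (w x y α β c : ℝ) : ℝ :=
  ((x - c)^2 / α^4) * Real.exp (-(x - c)^2 / (2 * α^2)) *
      (2 * w * Real.exp (-(x - c)^2 / (2 * α^2)) - y)
    + β - (w / α^2) * Real.exp (-(x - c)^2 / (2 * α^2)) *
      (w * Real.exp (-(x - c)^2 / (2 * α^2)) - y)

noncomputable def gaussE (x α c : ℝ) : ℝ := Real.exp (-(x - c)^2 / (2 * α^2))

lemma hasDerivAt_gaussE (x α : ℝ) (hα : α ≠ 0) (c : ℝ) :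
    HasDerivAt (gaussE x α) (gaussE x α c * ((x - c) / α ^ 2)) c := by
  have h1 : HasDerivAt (fun c : ℝ => -(x - c)^2 / (2 * α^2)) ((x - c) / α ^ 2) c := by
    have : HasDerivAt (fun c : ℝ => x - c) (-1) c := by
      simpa using (hasDerivAt_id c).const_sub x
    have h2 := ((this.pow 2).neg).div_const (2 * α ^ 2)
    refine h2.congr_deriv ?_
    field_simp
    ring
  exact h1.exp

noncomputable def gFun (w x y α : ℝ) (β c : ℝ) : ℝ :=
  (w * gaussE x α c - y) * (w * (gaussE x α c * ((x - c) / α ^ 2))) + β * c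

noncomputable def hFun (w x y α : ℝ) (β c : ℝ) : ℝ :=
  (w * (gaussE x α c * ((x - c) / α ^ 2))) * (w * (gaussE x α c * ((x - c) / α ^ 2)))
    + (w * gaussE x α c - y) *
      (w * (gaussE x α c * ((x - c) / α ^ 2) * ((x - c) / α ^ 2) + gaussE x α c * (-1 / α ^ 2)))
    + β

lemma hasDerivAt_primalP (w x y α β : ℝ) (hα : α ≠ 0) (c : ℝ) :
    HasDerivAt (fun c => primalP w x y α β c) (gFun w x y α β c) c := by
  have hE := hasDerivAt_gaussE x α hα c
  have h1 : HasDerivAt (fun c => (1/2 : ℝ) * (w * gaussE x α c - y)^2)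
      ((w * gaussE x α c - y) * (w * (gaussE x α c * ((x - c) / α ^ 2)))) c := by
    have := (((hE.const_mul w).sub_const y).pow 2).const_mul (1/2 : ℝ)
    refine this.congr_deriv ?_
    norm_num
    ring
  have h2 : HasDerivAt (fun c : ℝ => (1/2 : ℝ) * β * c^2) (β * c) c := by
    have := (hasDerivAt_pow 2 c).const_mul ((1/2 : ℝ) * β)
    refine this.congr_deriv ?_
    push_cast
    ring
  exact h1.add h2

lemma hasDerivAt_gFun (w x y α β : ℝ) (hα : α ≠ 0) (c : ℝ) :
    HasDerivAt (gFun w x y α β) (hFun w x y α β c) c := by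
  have hE := hasDerivAt_gaussE x α hα c
  have hq : HasDerivAt (fun c : ℝ => (x - c) / α ^ 2) (-1 / α ^ 2) c := by
    have : HasDerivAt (fun c : ℝ => x - c) (-1) c := by
      simpa using (hasDerivAt_id c).const_sub x
    simpa [div_eq_mul_inv] using this.div_const (α ^ 2)
  have hEq : HasDerivAt (fun c => gaussE x α c * ((x - c) / α ^ 2))
      (gaussE x α c * ((x - c) / α ^ 2) * ((x - c) / α ^ 2) + gaussE x α c * (-1 / α ^ 2)) c :=
    hE.mul hq
  have h1 := ((hE.const_mul w).sub_const y).mul (hEq.const_mul w)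
  have h2 : HasDerivAt (fun c : ℝ => β * c) β c := by
    simpa using (hasDerivAt_id c).const_mul β
  have := h1.add h2
  exact this

lemma deriv_primalP (w x y α β : ℝ) (hα : α ≠ 0) :
    deriv (fun c => primalP w x y α β c) = gFun w x y α β := by
  funext c
  exact (hasDerivAt_primalP w x y α β hα c).deriv

lemma deriv2_primalP (w x y α β : ℝ) (hα : α ≠ 0) (c : ℝ) :
    deriv^[2] (fun c => primalP w x y α β c) c = hFun w x y α β c := by
  have : deriv^[2] (fun c => primalP w x y α β c)
      = deriv (deriv (fun c => primalP w x y α β c)) := rfl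
  rw [this, deriv_primalP w x y α β hα]
  exact (hasDerivAt_gFun w x y α β hα c).deriv

lemma continuous_hFun (w x y α β : ℝ) : Continuous (hFun w x y α β) := by
  unfold hFun gaussE
  fun_prop

/-- At any c̄ with w·e^{-(x-c̄)²/(2α²)} = y/2 one has P''(c̄) = β + y²/(4α²) > 0;
hence any such critical point of P is a strict local minimum. -/
theorem pseudo_point_second_derivative_positive
    (w x y α β : ℝ) (hw : 0 < w) (hy : 0 < y) (hyw : y < 2 * w)
    (hα : α ≠ 0) (hβ : 0 < β) (cb : ℝ)
    (hcb : w * Real.exp (-(x - cb)^2 / (2 * α^2)) = y / 2) :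
    primalPsec w x y α β cb = β + y^2 / (4 * α^2) ∧
    0 < β + y^2 / (4 * α^2) ∧
    (deriv (fun c => primalP w x y α β c) cb = 0 →
      ∀ᶠ c in nhdsWithin cb {cb}ᶜ, primalP w x y α β cb < primalP w x y α β c) := by
  have hα2 : (α : ℝ) ^ 2 ≠ 0 := pow_ne_zero 2 hα
  have hpos : (0 : ℝ) < β + y^2 / (4 * α^2) := by positivity
  refine ⟨?_, hpos, ?_⟩
  · have hw' : w ≠ 0 := ne_of_gt hw
    have hE : Real.exp (-(x - cb)^2 / (2 * α^2)) = y / (2 * w) := by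
      field_simp at hcb ⊢
      linarith
    unfold primalPsec
    rw [hE]
    field_simp
    ring
  · intro hderiv
    -- second derivative at cb
    have hhcb : hFun w x y α β cb = β + y^2 / (4 * α^2) := by
      unfold hFun
      have : gaussE x α cb = y / (2 * w) := by
        have : w * gaussE x α cb = y / 2 := hcb
        field_simp at this ⊢
        linarith
      rw [this]
      field_simp
      ring
    have hhpos : 0 < hFun w x y α β cb := hhcb ▸ hpos
    -- neighborhood where hFun > 0
    have hev : ∀ᶠ c in nhds cb, 0 < hFun w x y α β c :=
      (isOpen_lt continuous_const (continuous_hFun w x y α β)).mem_nhds hhpos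
    obtain ⟨δ, hδ, hball⟩ := Metric.eventually_nhds_iff_ball.mp hev
    set S : Set ℝ := Set.Ioo (cb - δ) (cb + δ) with hS
    have hSsub : S ⊆ Metric.ball cb δ := by
      intro c hc
      rw [Real.ball_eq_Ioo]
      exact hc
    have hconv : StrictConvexOn ℝ S (fun c => primalP w x y α β c) := by
      apply strictConvexOn_of_deriv2_pos' (convex_Ioo _ _)
      · apply Continuous.continuousOn
        unfold primalP
        fun_prop
      · intro c hc
        rw [deriv2_primalP w x y α β hα c]
        exact hball c (hSsub hc)
    have hmemcb : cb ∈ S := by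
      constructor <;> [linarith; linarith]
    have hdiff : DifferentiableAt ℝ (fun c => primalP w x y α β c) cb :=
      (hasDerivAt_primalP w x y α β hα cb).differentiableAt
    have h1 : ∀ᶠ c in nhdsWithin cb {cb}ᶜ, c ∈ S :=
      eventually_nhdsWithin_of_eventually_nhds
        (Ioo_mem_nhds (by linarith) (by linarith))
    have h2 : ∀ᶠ c in nhdsWithin cb {cb}ᶜ, c ≠ cb :=
      eventually_mem_nhdsWithin.mono fun c hc => hc
    filter_upwards [h1, h2] with c hcS hcne
    rcases lt_or_gt_of_ne hcne with hlt | hgt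
    · have := hconv.slope_lt_deriv hcS hmemcb hlt hdiff
      rw [hderiv, slope_def_field] at this
      have h3 : (0:ℝ) < cb - c := by linarith
      have := (div_lt_iff₀ h3).mp this
      simp at this
      linarith
    · have := hconv.deriv_lt_slope hmemcb hcS hgt hdiff
      rw [hderiv, slope_def_field] at this
      have h3 : (0:ℝ) < c - cb := by linarith
      have := (lt_div_iff₀ h3).mp this
      simp at this
      linarith
end
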